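/- Let R be a ring. Then R is an exchange ring that is UJ# if and only if R is semi-Boolean, i.e., x^2 - x ∈ J(R) for every x ∈ R and idempotents lift modulo J(R) (for every a ∈ R with a^2 - a ∈ J(R) there exists an idempotent e ∈ R with a - e ∈ J(R)). -/

import Mathlib

/-- `J#(R)`: the set of elements `z` such that `z ^ n` lies in the Jacobson radical
(the intersection of the maximal left ideals) for some `n ≥ 1`. -/
def Jsharp (R : Type*) [Ring R] : Set R :=
  {z : R | ∃ n : ℕ, 1 ≤ n ∧ z ^ n ∈ Ideal.jacobson (⊥ : Ideal R)}

/-- A ring is a `UJ#` ring if `u - 1 ∈ J#(R)` for every unit `u`. -/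
def IsUJsharp (R : Type*) [Ring R] : Prop :=
  ∀ u : Rˣ, ((u : R) - 1) ∈ Jsharp R

/-- A ring is an exchange ring if for every element `a` there is an idempotent
`e ∈ Ra` with `1 - e ∈ R(1 - a)`. -/
def IsExchange (R : Type*) [Ring R] : Prop :=
  ∀ a : R, ∃ e : R, IsIdempotentElem e ∧ e ∈ Ideal.span {a} ∧ 1 - e ∈ Ideal.span {1 - a}



section JAPI
variable {R : Type*} [Ring R]

lemma myJ_left_inv {z : R} (hz : z ∈ Ideal.jacobson (⊥ : Ideal R)) (r : R) :
    ∃ s : R, s * (1 - r * z) = 1 := by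
  obtain ⟨s, hs⟩ := Ideal.mem_jacobson_iff.mp hz (-r)
  rw [Ideal.mem_bot] at hs
  refine ⟨s, ?_⟩
  have h := eq_of_sub_eq_zero hs
  calc s * (1 - r * z) = s * -r * z + s := by noncomm_ring
    _ = 1 := h

lemma myJ_of_left_inv {z : R} (h : ∀ r : R, ∃ s : R, s * (1 - r * z) = 1) :
    z ∈ Ideal.jacobson (⊥ : Ideal R) := by
  rw [Ideal.mem_jacobson_iff]
  intro y
  obtain ⟨s, hs⟩ := h (-y)
  refine ⟨s, ?_⟩
  rw [Ideal.mem_bot, sub_eq_zero]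
  calc s * y * z + s = s * (1 - -y * z) := by noncomm_ring
    _ = 1 := hs

lemma myJ_isUnit {z : R} (hz : z ∈ Ideal.jacobson (⊥ : Ideal R)) (r : R) :
    IsUnit (1 - r * z) := by
  obtain ⟨s, hs⟩ := myJ_left_inv hz r
  have hs' : s = 1 - -(s * r) * z := by
    have h' : s * (1 - r * z) = s - s * r * z := by noncomm_ring
    rw [h'] at hs
    rw [neg_mul, sub_neg_eq_add, ← hs]
    noncomm_ring
  obtain ⟨t, ht⟩ := myJ_left_inv hz (-(s * r))
  rw [← hs'] at ht
  have htval : t = 1 - r * z := by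
    calc t = t * (s * (1 - r * z)) := by rw [hs, mul_one]
      _ = t * s * (1 - r * z) := by rw [mul_assoc]
      _ = 1 - r * z := by rw [ht, one_mul]
  exact ⟨⟨1 - r * z, s, by rw [← htval]; exact ht, hs⟩, rfl⟩

lemma myJ_isUnit_one_add {j : R} (hj : j ∈ Ideal.jacobson (⊥ : Ideal R)) :
    IsUnit (1 + j) := by
  have := myJ_isUnit hj (-1)
  simpa using this

lemma myJ_mul_right {z : R} (hz : z ∈ Ideal.jacobson (⊥ : Ideal R)) (y : R) :
    z * y ∈ Ideal.jacobson (⊥ : Ideal R) := by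
  exact Ideal.mul_mem_right y _ hz

lemma isUnit_of_left_right {a l r' : R} (hl : l * a = 1) (hr : a * r' = 1) : IsUnit a := by
  have hrl : r' = l := by rw [← one_mul r', ← hl, mul_assoc, hr, mul_one]
  exact ⟨⟨a, r', hr, by rw [hrl, hl]⟩, rfl⟩

lemma myJ_isUnit_one_sub_pow {x : R} {n : ℕ} (h : x ^ n ∈ Ideal.jacobson (⊥ : Ideal R)) :
    IsUnit (1 - x) := by
  have hm : IsUnit (1 - x ^ n) := by simpa using myJ_isUnit h 1
  have e1 : (1 - x) * (∑ i ∈ Finset.range n, x ^ i) = 1 - x ^ n := by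
    calc (1 - x) * (∑ i ∈ Finset.range n, x ^ i)
        = -((x - 1) * ∑ i ∈ Finset.range n, x ^ i) := by noncomm_ring
      _ = -(x ^ n - 1) := by rw [mul_geom_sum]
      _ = 1 - x ^ n := by noncomm_ring
  have e2 : (∑ i ∈ Finset.range n, x ^ i) * (1 - x) = 1 - x ^ n := by
    calc (∑ i ∈ Finset.range n, x ^ i) * (1 - x)
        = -((∑ i ∈ Finset.range n, x ^ i) * (x - 1)) := by noncomm_ring
      _ = -(x ^ n - 1) := by rw [geom_sum_mul]
      _ = 1 - x ^ n := by noncomm_ring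
  refine isUnit_of_left_right (l := ↑hm.unit⁻¹ * ∑ i ∈ Finset.range n, x ^ i)
    (r' := (∑ i ∈ Finset.range n, x ^ i) * ↑hm.unit⁻¹) ?_ ?_
  · rw [mul_assoc, e2]; exact hm.val_inv_mul
  · rw [← mul_assoc, e1]; exact hm.mul_val_inv

end JAPI


lemma matrix_contra {T : Type*} [Ring T]
    (h2 : ∀ x : T, x + x = 0)
    (hU : ∀ u : Tˣ, ∃ n : ℕ, 1 ≤ n ∧ ((u : T) - 1) ^ n = 0)
    (f u b : T)
    (hff : f * f = f) (hfu : f * u = u) (huf : u * f = 0) (huu : u * u = 0)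
    (hub : u * b = f) (hfb : f * b = 0) (hbf : b * f = b) (hbb : b * b = 0)
    (hf0 : f ≠ 0) : False := by
  have hneg : ∀ x : T, -x = x := fun x => neg_eq_of_add_eq_zero_left (h2 x)
  have hsub : ∀ x y : T, x - y = x + y := fun x y => by rw [sub_eq_add_neg, hneg]
  have hu0 : u ≠ 0 := fun hu => hf0 (by rw [← hub, hu, zero_mul])
  have hufne : u + f ≠ 0 := by
    intro hsum
    have huf' : u = f := by
      have h' : u + (f + f) = f := by rw [← add_assoc, hsum, zero_add]
      rwa [h2, add_zero] at h'
    apply hf0; rw [← hff, ← huf', huu]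
  obtain ⟨g, hgdef⟩ : ∃ g : T, g = b * u := ⟨_, rfl⟩
  have hgg : g * g = g := by rw [hgdef, mul_assoc, ← mul_assoc u b u, hub, ← mul_assoc, hbf]
  have hug : u * g = u := by rw [hgdef, ← mul_assoc, hub, hfu]
  have hgu : g * u = 0 := by rw [hgdef, mul_assoc, huu, mul_zero]
  have hgb : g * b = b := by rw [hgdef, mul_assoc, hub, hbf]
  have hbg : b * g = 0 := by rw [hgdef, ← mul_assoc, hbb, zero_mul]
  have hfg : f * g = 0 := by rw [hgdef, ← mul_assoc, hfb, zero_mul]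
  have hgf : g * f = 0 := by rw [hgdef, mul_assoc, huf, mul_zero]
  have hbu : b * u = g := hgdef.symm
  obtain ⟨v, hvdef⟩ : ∃ v : T, v = u + b + g := ⟨_, rfl⟩
  obtain ⟨h, hhdef⟩ : ∃ h : T, h = f + g := ⟨_, rfl⟩
  have hv2 : v * v = f + u + b := by
    rw [hvdef, show (u + b + g) * (u + b + g)
        = u*u + u*b + u*g + (b*u + b*b + b*g) + (g*u + g*b + g*g) from by noncomm_ring,
      huu, hub, hug, hbu, hbb, hbg, hgu, hgb, hgg]
    rw [← sub_eq_zero, show 0 + f + u + (g + 0 + 0) + (0 + b + g) - (f + u + b) = g + g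
        from by abel, h2]
  have hv2h : (v * v) * h = v * v := by
    rw [hv2, hhdef, show (f + u + b) * (f + g)
        = f*f + f*g + (u*f + u*g) + (b*f + b*g) from by noncomm_ring,
      hff, hfg, huf, hug, hbf, hbg]
    abel
  have hhv2 : h * (v * v) = v * v := by
    rw [hv2, hhdef, show (f + g) * (f + u + b)
        = f*f + f*u + f*b + (g*f + g*u + g*b) from by noncomm_ring,
      hff, hfu, hfb, hgf, hgu, hgb]
    abel
  have hv2v : (v * v) * v = h := by
    rw [hv2, hvdef, hhdef, show (f + u + b) * (u + b + g)
        = f*u + f*b + f*g + (u*u + u*b + u*g) + (b*u + b*b + b*g) from by noncomm_ring,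
      hfu, hfb, hfg, huu, hub, hug, hbu, hbb, hbg]
    rw [← sub_eq_zero, show u + 0 + 0 + (0 + f + u) + (g + 0 + 0) - (f + g) = u + u
        from by abel, h2]
  have hvv2 : v * (v * v) = h := by
    rw [hv2, hvdef, hhdef, show (u + b + g) * (f + u + b)
        = u*f + u*u + u*b + (b*f + b*u + b*b) + (g*f + g*u + g*b) from by noncomm_ring,
      huf, huu, hub, hbf, hbu, hbb, hgf, hgu, hgb]
    rw [← sub_eq_zero, show 0 + 0 + f + (b + g + 0) + (0 + 0 + b) - (f + g) = b + b
        from by abel, h2]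
  have hvh : v * h = v := by
    rw [hvdef, hhdef, show (u + b + g) * (f + g)
        = u*f + u*g + (b*f + b*g) + (g*f + g*g) from by noncomm_ring,
      huf, hug, hbf, hbg, hgf, hgg]
    abel
  have hhv : h * v = v := by
    rw [hvdef, hhdef, show (f + g) * (u + b + g)
        = f*u + f*b + f*g + (g*u + g*b + g*g) from by noncomm_ring,
      hfu, hfb, hfg, hgu, hgb, hgg]
    abel
  have hhh : h * h = h := by
    rw [hhdef, show (f + g) * (f + g) = f*f + f*g + (g*f + g*g) from by noncomm_ring,
      hff, hfg, hgf, hgg]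
    abel
  have hv1h : v * (1 - h) = 0 := by rw [mul_sub, mul_one, hvh, sub_self]
  have h1hv : (1 - h) * v = 0 := by rw [sub_mul, one_mul, hhv, sub_self]
  have h1h1h : (1 - h) * (1 - h) = 1 - h := by
    rw [show (1 - h) * (1 - h) = 1 - h - h + h*h from by noncomm_ring, hhh]; abel
  have hv2_1h : (v * v) * (1 - h) = 0 := by rw [mul_sub, mul_one, hv2h, sub_self]
  have h1h_v2 : (1 - h) * (v * v) = 0 := by rw [sub_mul, one_mul, hhv2, sub_self]
  obtain ⟨U, hUdef⟩ : ∃ U : T, U = v + (1 - h) := ⟨_, rfl⟩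
  have hU2 : U * U = v * v + (1 - h) := by
    rw [hUdef, show (v + (1 - h)) * (v + (1 - h))
        = v*v + v*(1-h) + ((1-h)*v + (1-h)*(1-h)) from by noncomm_ring,
      hv1h, h1hv, h1h1h]
    abel
  have hU3a : (U * U) * U = 1 := by
    rw [hU2, hUdef, show (v*v + (1 - h)) * (v + (1 - h))
        = (v*v)*v + (v*v)*(1-h) + ((1-h)*v + (1-h)*(1-h)) from by noncomm_ring,
      hv2v, hv2_1h, h1hv, h1h1h]
    abel
  have hU3b : U * (U * U) = 1 := by
    rw [hU2, hUdef, show (v + (1 - h)) * (v*v + (1 - h))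
        = v*(v*v) + v*(1-h) + ((1-h)*(v*v) + (1-h)*(1-h)) from by noncomm_ring,
      hvv2, hv1h, h1h_v2, h1h1h]
    abel
  obtain ⟨w, hwdef⟩ : ∃ w : T, w = v + h := ⟨_, rfl⟩
  have hvvh : v * v + h = v := by
    rw [hv2, hvdef, hhdef, ← sub_eq_zero,
      show f + u + b + (f + g) - (u + b + g) = f + f from by abel, h2]
  have hww : w * w = v := by
    rw [hwdef, show (v + h) * (v + h) = v*v + v*h + (h*v + h*h) from by noncomm_ring,
      hvh, hhv, hhh, ← sub_eq_zero, show v*v + v + (v + h) - v = (v*v + h) + (v + v) - v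
        from by abel, hvvh, h2]
    abel
  have hvw : v * w = h := by
    rw [hwdef, mul_add, hv2, hvh, hvdef, hhdef, ← sub_eq_zero,
      show f + u + b + (u + b + g) - (f + g) = (u + u) + (b + b) from by abel, h2, h2, add_zero]
  have hhw : h * w = w := by
    rw [hwdef, mul_add, hhv, hhh]
  -- the unit of order 3
  have hUu : ∃ Uu : Tˣ, (Uu : T) = U := ⟨⟨U, U * U, hU3b, hU3a⟩, rfl⟩
  obtain ⟨Uu, hUuval⟩ := hUu
  obtain ⟨n, hn, hwn⟩ := hU Uu
  have hU1w : (Uu : T) - 1 = w := by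
    rw [hUuval, hUdef, hwdef, show v + (1 - h) - 1 = v - h from by abel, hsub]
  rw [hU1w] at hwn
  -- powers of w cycle among w, v, h
  have hcyc : ∀ m : ℕ, 1 ≤ m → w ^ m = w ∨ w ^ m = v ∨ w ^ m = h := by
    intro m hm
    induction m with
    | zero => omega
    | succ k ih =>
      rcases Nat.eq_or_lt_of_le hm with hk1 | hk1
      · left; rw [← hk1, pow_one]
      · have hk : 1 ≤ k := by omega
        rcases ih hk with hc | hc | hc <;> rw [pow_succ, hc]
        · right; left; exact hww
        · right; right; exact hvw
        · left; exact hhw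
  have hfv : f * v = u := by
    rw [hvdef, mul_add, mul_add, hfu, hfb, hfg, add_zero, add_zero]
  have hfh : f * h = f := by
    rw [hhdef, mul_add, hff, hfg, add_zero]
  have hfw : f * w = u + f := by
    rw [hwdef, mul_add, hfv, hfh]
  rcases hcyc n hn with hc | hc | hc <;> rw [hc] at hwn
  · exact hufne (by rw [← hfw, hwn, mul_zero])
  · exact hu0 (by rw [← hfv, hwn, mul_zero])
  · exact hf0 (by rw [← hfh, hwn, mul_zero])

lemma myreduced {T : Type*} [Ring T]
    (h2 : ∀ x : T, x + x = 0)
    (hsemi : ∀ z : T, z ≠ 0 → ∃ e r : T, e ≠ 0 ∧ e * e = e ∧ e = r * z)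
    (hU : ∀ u : Tˣ, ∃ n : ℕ, 1 ≤ n ∧ ((u : T) - 1) ^ n = 0) :
    ∀ z : T, z * z = 0 → z = 0 := by
  intro z hzz
  by_contra hz
  obtain ⟨e, r, he0, hee, her⟩ := hsemi z hz
  rw [her] at hee he0
  have hzz' : ∀ t : T, z * (z * t) = 0 := fun t => by rw [← mul_assoc, hzz, zero_mul]
  have hp : r * (z * (r * z)) = r * z := by
    have := hee; rwa [mul_assoc] at this
  have hp' : ∀ t : T, r * (z * (r * (z * t))) = r * (z * t) := fun t => by
    have := congrArg (· * t) hee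
    simpa only [mul_assoc] using this
  -- word identities for f = zrzr, u' = zrz, b = rf - f(rf)
  have hff : (z*r*z*r) * (z*r*z*r) = z*r*z*r := by
    simp only [mul_assoc, hp, hp', hzz, hzz', mul_zero, zero_mul]
  have hfu : (z*r*z*r) * (z*r*z) = z*r*z := by
    simp only [mul_assoc, hp, hp', hzz, hzz', mul_zero, zero_mul]
  have huf : (z*r*z) * (z*r*z*r) = 0 := by
    simp only [mul_assoc, hp, hp', hzz, hzz', mul_zero, zero_mul]
  have huu : (z*r*z) * (z*r*z) = 0 := by
    simp only [mul_assoc, hp, hp', hzz, hzz', mul_zero, zero_mul]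
  have hurf : (z*r*z) * (r * (z*r*z*r)) = z*r*z*r := by
    simp only [mul_assoc, hp, hp', hzz, hzz', mul_zero, zero_mul]
  have hf0 : z*r*z*r ≠ 0 := by
    intro hf
    apply he0
    have hrzf : r * z = r * (z*r*z*r) * z := by
      simp only [mul_assoc, hp, hp', hzz, hzz', mul_zero, zero_mul]
    rw [hrzf, hf, mul_zero, zero_mul]
  -- b-relations
  have hub : (z*r*z) * (r * (z*r*z*r) - (z*r*z*r) * (r * (z*r*z*r))) = z*r*z*r := by
    rw [mul_sub, hurf, ← mul_assoc, huf, zero_mul, sub_zero]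
  have hfb : (z*r*z*r) * (r * (z*r*z*r) - (z*r*z*r) * (r * (z*r*z*r))) = 0 := by
    rw [mul_sub, ← mul_assoc _ (z*r*z*r) (r * (z*r*z*r)), hff, sub_self]
  have hbf : (r * (z*r*z*r) - (z*r*z*r) * (r * (z*r*z*r))) * (z*r*z*r)
      = r * (z*r*z*r) - (z*r*z*r) * (r * (z*r*z*r)) := by
    rw [sub_mul, mul_assoc (z*r*z*r) (r * (z*r*z*r)) (z*r*z*r),
      mul_assoc r (z*r*z*r) (z*r*z*r), hff]
  have hbb : (r * (z*r*z*r) - (z*r*z*r) * (r * (z*r*z*r)))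
      * (r * (z*r*z*r) - (z*r*z*r) * (r * (z*r*z*r))) = 0 := by
    rw [mul_sub, ← mul_assoc _ (z*r*z*r) (r * (z*r*z*r)), hbf, sub_self]
  exact matrix_contra h2 hU (z*r*z*r) (z*r*z)
    (r * (z*r*z*r) - (z*r*z*r) * (r * (z*r*z*r)))
    hff hfu huf huu hub hfb hbf hbb hf0

lemma myboolean {T : Type*} [Ring T]
    (h2 : (2 : T) = 0)
    (hE : ∀ a : T, ∃ e r s : T, e * e = e ∧ e = r * a ∧ 1 - e = s * (1 - a))
    (hU : ∀ u : Tˣ, ∃ n : ℕ, 1 ≤ n ∧ ((u : T) - 1) ^ n = 0)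
    (hJ : ∀ z : T, (∀ r : T, ∃ s : T, s * (1 - r * z) = 1) → z = 0) :
    ∀ a : T, a * a = a := by
  have hxx : ∀ x : T, x + x = 0 := fun x => by
    have h' : (2:T) * x = 0 := by rw [h2, zero_mul]
    rwa [two_mul] at h'
  -- semipotency
  have hsemi : ∀ z : T, z ≠ 0 → ∃ e r : T, e ≠ 0 ∧ e * e = e ∧ e = r * z := by
    intro z hz
    by_contra hno
    push_neg at hno
    apply hz
    apply hJ
    intro r
    obtain ⟨e, t, s, hee, het, hes⟩ := hE (r * z)
    have he0 : e = 0 := by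
      by_contra he0'
      exact (hno e (t * r) he0' hee) (by rw [het, mul_assoc])
    rw [he0, sub_zero] at hes
    exact ⟨s, hes.symm⟩
  have hred : ∀ z : T, z * z = 0 → z = 0 := myreduced hxx hsemi hU
  have hnil : ∀ n : ℕ, ∀ z : T, 1 ≤ n → z ^ n = 0 → z = 0 := by
    intro n
    induction n using Nat.strong_induction_on with
    | _ n ih =>
      intro z hn hzn
      rcases eq_or_lt_of_le hn with h1 | h1
      · rwa [← h1, pow_one] at hzn
      · have key : z ^ (n - 1) * z ^ (n - 1) = 0 := by
          rw [← pow_add, show n - 1 + (n - 1) = n + (n - 2) from by omega, pow_add, hzn,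
            zero_mul]
        exact ih (n - 1) (by omega) z (by omega) (hred _ key)
  have hunits : ∀ u : Tˣ, (u : T) = 1 := by
    intro u
    obtain ⟨n, hn, hun⟩ := hU u
    exact sub_eq_zero.mp (hnil n _ hn hun)
  have hlr : ∀ a b : T, b * a = 1 → a * b = 1 := by
    intro a b hba
    have hxa : (1 - a * b) * a = 0 := by
      rw [sub_mul, one_mul, mul_assoc, hba, mul_one, sub_self]
    have hax : a * (1 - a * b) = 0 := by
      apply hred
      rw [show a * (1 - a*b) * (a * (1 - a*b)) = a * ((1 - a*b) * a) * (1 - a*b) from by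
        noncomm_ring, hxa, mul_zero, zero_mul]
    have hzero : (1 : T) - a * b = 0 := by
      calc (1:T) - a*b = b * a * (1 - a*b) := by rw [hba, one_mul]
        _ = b * (a * (1 - a*b)) := by rw [mul_assoc]
        _ = 0 := by rw [hax, mul_zero]
    exact (sub_eq_zero.mp hzero).symm
  have hcen : ∀ e x : T, e * e = e → e * x = x * e := by
    intro e x he
    have k1 : e * x * (1 - e) = 0 := by
      apply hred
      rw [show e*x*(1-e) * (e*x*(1-e)) = e*x*((1-e)*e)*(x*(1-e)) from by noncomm_ring,
        show (1-e)*e = 0 from by rw [sub_mul, one_mul, he, sub_self], mul_zero, zero_mul]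
    have k2 : (1 - e) * x * e = 0 := by
      apply hred
      rw [show (1-e)*x*e * ((1-e)*x*e) = (1-e)*x*(e*(1-e))*(x*e) from by noncomm_ring,
        show e*(1-e) = 0 from by rw [mul_sub, mul_one, he, sub_self], mul_zero, zero_mul]
    have ha : e * x = e * x * e := by
      have := k1; rw [mul_sub, mul_one, sub_eq_zero] at this; exact this
    have hb : x * e = e * x * e := by
      have := k2; rw [sub_mul, one_mul, sub_mul, sub_eq_zero, mul_assoc] at this
      rw [← mul_assoc] at this; exact this
    rw [ha, hb]
  -- corner argument
  have corner : ∀ e' r' a' : T, e' * e' = e' → e' = r' * a' → e' * a' = a' * e' →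
      a' * e' = e' := by
    intro e' r' a' hee' her' hc
    have hee1 : e' * (1 - e') = 0 := by rw [mul_sub, mul_one, hee', sub_self]
    have h1e1 : (1 - e') * e' = 0 := by rw [sub_mul, one_mul, hee', sub_self]
    have h11 : (1 - e') * (1 - e') = 1 - e' := by
      rw [sub_mul, one_mul, mul_sub, mul_one, hee']; abel
    have h1 : (e'*r'*e') * (e'*a'*e') = e' := by
      calc (e'*r'*e') * (e'*a'*e') = (e'*r') * (e'*e') * (a'*e') := by noncomm_ring
        _ = e'*r' * (e'*a') * e' := by rw [hee']; noncomm_ring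
        _ = e'*r' * (a'*e') * e' := by rw [hc]
        _ = e' * (r'*a') * (e'*e') := by noncomm_ring
        _ = e' := by rw [← her', hee', hee']
    have h2' : (e'*r'*e') * (1 - e') = 0 := by
      rw [mul_assoc (e'*r') e' (1-e'), hee1, mul_zero]
    have h3 : (1 - e') * (e'*a'*e') = 0 := by
      rw [show (1-e') * (e'*a'*e') = ((1-e')*e') * (a'*e') from by noncomm_ring, h1e1,
        zero_mul]
    have hLU : (e'*r'*e' + (1-e')) * (e'*a'*e' + (1-e')) = 1 := by
      rw [add_mul, mul_add, mul_add, h1, h2', h3, h11]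
      abel
    have hUL := hlr _ _ hLU
    have h1e : e'*a'*e' + (1-e') = 1 := by
      simpa using hunits ⟨e'*a'*e' + (1-e'), e'*r'*e' + (1-e'), hUL, hLU⟩
    have heae : e'*a'*e' = e' := by
      calc e'*a'*e' = e'*a'*e' + (1-e') - (1-e') := by abel
        _ = 1 - (1-e') := by rw [h1e]
        _ = e' := by abel
    calc a'*e' = a'*(e'*e') := by rw [hee']
      _ = a'*e'*e' := by rw [← mul_assoc]
      _ = e'*a'*e' := by rw [hc]
      _ = e' := heae
  -- conclusion
  intro a
  obtain ⟨e, r, s, hee, her, hes⟩ := hE a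
  have hae : a * e = e := corner e r a hee her (hcen e a hee)
  have hf : (1-e) * (1-e) = 1-e := by
    rw [sub_mul, one_mul, mul_sub, mul_one, hee]; abel
  have ha1e : (1-a) * (1-e) = 1-e := corner (1-e) s (1-a) hf hes (hcen (1-e) (1-a) hf)
  have hae0 : a * (1-e) = 0 := by
    have := ha1e
    rw [sub_mul, one_mul, sub_eq_self] at this
    exact this
  have haee : a = e := by
    have h5 : a*e + a*(1-e) = a := by
      rw [← mul_add, show e + (1-e) = (1:T) from by abel, mul_one]
    rw [hae0, add_zero, hae] at h5
    exact h5.symm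
  rw [haee, hee]

lemma mysemiboolean (R : Type*) [Ring R] (hex : IsExchange R) (huj : IsUJsharp R) :
    ∀ x : R, x * x - x ∈ Ideal.jacobson (⊥ : Ideal R) := by
  classical
  -- 2 ∈ J
  have hneg1 : ((-1 : Rˣ) : R) - 1 ∈ Jsharp R := huj (-1)
  obtain ⟨n, hn, hpow⟩ := hneg1
  have hval : ((-1 : Rˣ) : R) - 1 = -2 := by
    simp only [Units.val_neg, Units.val_one]
    norm_num
  rw [hval] at hpow
  have h2pow : (2 : R) ^ n ∈ Ideal.jacobson (⊥ : Ideal R) := by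
    rcases Nat.even_or_odd n with he | ho
    · rwa [he.neg_pow] at hpow
    · rw [ho.neg_pow] at hpow
      simpa using neg_mem hpow
  have h2J : (2 : R) ∈ Ideal.jacobson (⊥ : Ideal R) := by
    apply myJ_of_left_inv
    intro r
    have hc2 : Commute r (2 : R) := by
      show r * 2 = 2 * r
      rw [mul_two, two_mul]
    have hxn : (r * 2) ^ n ∈ Ideal.jacobson (⊥ : Ideal R) := by
      rw [hc2.mul_pow]
      exact Ideal.mul_mem_left _ _ h2pow
    have hun := myJ_isUnit_one_sub_pow hxn
    exact ⟨↑hun.unit⁻¹, hun.val_inv_mul⟩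
  -- quotient by the Jacobson radical
  set Jt : TwoSidedIdeal R := TwoSidedIdeal.jacobson ⊥ with hJtdef
  set c : RingCon R := Jt.ringCon with hcdef
  have hmem : ∀ y : R, y ∈ Jt ↔ y ∈ Ideal.jacobson (⊥ : Ideal R) := by
    intro y
    rw [hJtdef, TwoSidedIdeal.mem_jacobson_iff, Ideal.mem_jacobson_iff]
    simp only [TwoSidedIdeal.mem_bot, Ideal.mem_bot]
  have hker : ∀ y : R, (y : c.Quotient) = 0 ↔ y ∈ Ideal.jacobson (⊥ : Ideal R) := by
    intro y
    rw [← RingCon.coe_zero, RingCon.eq]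
    change Jt.ringCon y 0 ↔ _
    rw [TwoSidedIdeal.rel_iff, sub_zero]
    exact hmem y
  have hsurj : ∀ t : c.Quotient, ∃ y : R, (y : c.Quotient) = t := by
    intro t
    rcases Quot.exists_rep t with ⟨a, ha⟩
    exact ⟨a, ha⟩
  -- transfer the hypotheses
  have h2T : (2 : c.Quotient) = 0 := by
    rw [← one_add_one_eq_two, show (1 : c.Quotient) = ((1 : R) : c.Quotient) from
      (RingCon.coe_one c).symm, ← RingCon.coe_add]
    exact (hker _).mpr (by rw [one_add_one_eq_two]; exact h2J)
  have hET : ∀ a : c.Quotient, ∃ e r s : c.Quotient,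
      e * e = e ∧ e = r * a ∧ 1 - e = s * (1 - a) := by
    intro t
    obtain ⟨a, ha⟩ := hsurj t
    subst ha
    obtain ⟨e, hee, hsp1, hsp2⟩ := hex a
    obtain ⟨r0, hr0⟩ := Submodule.mem_span_singleton.mp hsp1
    obtain ⟨s0, hs0⟩ := Submodule.mem_span_singleton.mp hsp2
    rw [smul_eq_mul] at hr0 hs0
    refine ⟨(e : c.Quotient), (r0 : c.Quotient), (s0 : c.Quotient), ?_, ?_, ?_⟩
    · rw [← RingCon.coe_mul, hee.eq]
    · rw [← RingCon.coe_mul, hr0]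
    · have h' : ((1 - e : R) : c.Quotient) = ((s0 * (1 - a) : R) : c.Quotient) := by
        rw [hs0]
      simpa only [RingCon.coe_sub, RingCon.coe_mul, RingCon.coe_one] using h'
  have hUT : ∀ u : (c.Quotient)ˣ, ∃ m : ℕ, 1 ≤ m ∧ ((u : c.Quotient) - 1) ^ m = 0 := by
    intro u
    obtain ⟨a, ha⟩ := hsurj (u : c.Quotient)
    obtain ⟨b, hb⟩ := hsurj ((u⁻¹ : (c.Quotient)ˣ) : c.Quotient)
    have hab : a * b - 1 ∈ Ideal.jacobson (⊥ : Ideal R) := by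
      rw [← hker, RingCon.coe_sub, RingCon.coe_mul, RingCon.coe_one, ha, hb,
        Units.mul_inv, sub_self]
    have hba : b * a - 1 ∈ Ideal.jacobson (⊥ : Ideal R) := by
      rw [← hker, RingCon.coe_sub, RingCon.coe_mul, RingCon.coe_one, ha, hb,
        Units.inv_mul, sub_self]
    have huab : IsUnit (a * b) := by
      have h' := myJ_isUnit hab (-1)
      have heq : (1 : R) - (-1) * (a * b - 1) = a * b := by noncomm_ring
      rwa [heq] at h'
    have huba : IsUnit (b * a) := by
      have h' := myJ_isUnit hba (-1)
      have heq : (1 : R) - (-1) * (b * a - 1) = b * a := by noncomm_ring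
      rwa [heq] at h'
    have hua : IsUnit a := by
      refine isUnit_of_left_right (l := ↑huba.unit⁻¹ * b) (r' := b * ↑huab.unit⁻¹) ?_ ?_
      · rw [mul_assoc]; exact huba.val_inv_mul
      · rw [← mul_assoc]; exact huab.mul_val_inv
    obtain ⟨m, hm, hmJ⟩ := huj hua.unit
    rw [hua.unit_spec] at hmJ
    refine ⟨m, hm, ?_⟩
    rw [← ha]
    have : ((a : c.Quotient) - 1) ^ m = (((a - 1) ^ m : R) : c.Quotient) := by
      rw [RingCon.coe_pow, RingCon.coe_sub, RingCon.coe_one]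
    rw [this]
    exact (hker _).mpr hmJ
  have hJT : ∀ z : c.Quotient, (∀ r : c.Quotient, ∃ s : c.Quotient,
      s * (1 - r * z) = 1) → z = 0 := by
    intro z hz
    obtain ⟨z0, hz0⟩ := hsurj z
    subst hz0
    rw [hker]
    apply myJ_of_left_inv
    intro r
    obtain ⟨sq, hsq⟩ := hz (r : c.Quotient)
    obtain ⟨s0, hs0⟩ := hsurj sq
    subst hs0
    have h1 : ((s0 * (1 - r * z0) : R) : c.Quotient) = ((1 : R) : c.Quotient) := by
      rw [RingCon.coe_mul, RingCon.coe_sub, RingCon.coe_one, RingCon.coe_mul]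
      rw [hsq]
    have h2 : s0 * (1 - r * z0) - 1 ∈ Ideal.jacobson (⊥ : Ideal R) := by
      rw [← hker, RingCon.coe_sub, RingCon.coe_one, h1, RingCon.coe_one, sub_self]
    have hw : IsUnit (s0 * (1 - r * z0)) := by
      have h' := myJ_isUnit h2 (-1)
      have heq : (1 : R) - (-1) * (s0 * (1 - r * z0) - 1) = s0 * (1 - r * z0) := by
        noncomm_ring
      rwa [heq] at h'
    refine ⟨↑hw.unit⁻¹ * s0, ?_⟩
    rw [mul_assoc]
    exact hw.val_inv_mul
  have hb := myboolean h2T hET hUT hJT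
  intro x
  rw [← hker, RingCon.coe_sub, RingCon.coe_mul]
  rw [hb (x : c.Quotient), sub_self]

theorem exchange_isUJsharp_iff_semiBoolean (R : Type*) [Ring R] :
    (IsExchange R ∧ IsUJsharp R) ↔
      ((∀ x : R, x ^ 2 - x ∈ Ideal.jacobson (⊥ : Ideal R)) ∧
        ∀ a : R, a ^ 2 - a ∈ Ideal.jacobson (⊥ : Ideal R) →
          ∃ e : R, IsIdempotentElem e ∧ a - e ∈ Ideal.jacobson (⊥ : Ideal R)) := by
  constructor
  · rintro ⟨hex, huj⟩
    constructor
    · intro x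
      have h := mysemiboolean R hex huj x
      rwa [pow_two]
    · intro a ha
      obtain ⟨e, hee, hsp1, hsp2⟩ := hex a
      obtain ⟨t, ht⟩ := Submodule.mem_span_singleton.mp hsp1
      obtain ⟨s, hs⟩ := Submodule.mem_span_singleton.mp hsp2
      rw [smul_eq_mul] at ht hs
      refine ⟨e, hee, ?_⟩
      have h1 : a - e * a = s * (a - a * a) := by
        calc a - e * a = (1 - e) * a := by noncomm_ring
          _ = s * (1 - a) * a := by rw [hs]
          _ = s * (a - a * a) := by noncomm_ring
      have h2 : e * a - e = t * (a * a - a) := by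
        calc e * a - e = (t * a) * a - t * a := by rw [ht]
          _ = t * (a * a - a) := by noncomm_ring
      have hm1 : a - e * a ∈ Ideal.jacobson (⊥ : Ideal R) := by
        rw [h1]
        apply Ideal.mul_mem_left
        have heq : a - a * a = -(a ^ 2 - a) := by rw [pow_two]; abel
        rw [heq]
        exact neg_mem ha
      have hm2 : e * a - e ∈ Ideal.jacobson (⊥ : Ideal R) := by
        rw [h2]
        apply Ideal.mul_mem_left
        rwa [← pow_two]
      have heq2 : a - e = (a - e * a) + (e * a - e) := by abel
      rw [heq2]
      exact add_mem hm1 hm2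
  · rintro ⟨hsb, hlift⟩
    constructor
    · -- exchange
      intro a
      have ha : a ^ 2 - a ∈ Ideal.jacobson (⊥ : Ideal R) := hsb a
      obtain ⟨f, hf, hfa⟩ := hlift a ha
      have hff : f * f = f := hf
      have hu : IsUnit (1 + (a - f)) := myJ_isUnit_one_add hfa
      set U := hu.unit with hUdef
      have hUspec : (U : R) = 1 + (a - f) := hu.unit_spec
      have hfU : f * ↑U = f * a := by
        rw [hUspec]
        calc f * (1 + (a - f)) = f + (f * a - f * f) := by noncomm_ring
          _ = f + (f * a - f) := by rw [hff]
          _ = f * a := by abel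
      set e1 : R := ↑U⁻¹ * (f * a) with he1def
      have he1U : e1 = ↑U⁻¹ * (f * ↑U) := by rw [he1def, hfU]
      have he1e1 : e1 * e1 = e1 := by
        rw [he1U]
        calc (↑U⁻¹ * (f * ↑U)) * (↑U⁻¹ * (f * ↑U))
            = ↑U⁻¹ * ((f * (↑U * ↑U⁻¹)) * (f * ↑U)) := by noncomm_ring
          _ = ↑U⁻¹ * ((f * 1) * (f * ↑U)) := by rw [Units.mul_inv]
          _ = ↑U⁻¹ * ((f * f) * ↑U) := by rw [mul_one]; noncomm_ring
          _ = ↑U⁻¹ * (f * ↑U) := by rw [hff]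
      have hkey : f * ↑U - ↑U * a = ((f - a) * a) * 2 + (a ^ 2 - a) := by
        rw [hfU, hUspec]
        noncomm_ring
      have he1a : e1 - a ∈ Ideal.jacobson (⊥ : Ideal R) := by
        have heq : e1 - a = ↑U⁻¹ * (f * ↑U - ↑U * a) := by
          rw [he1U, mul_sub, ← mul_assoc (↑U⁻¹ : R) (↑U : R) a, Units.inv_mul, one_mul]
        rw [heq, hkey]
        refine Ideal.mul_mem_left _ _ (add_mem ?_ ha)
        refine myJ_mul_right (myJ_mul_right ?_ a) 2
        have heq2 : f - a = -(a - f) := by abel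
        rw [heq2]
        exact neg_mem hfa
      have hae1 : a - e1 ∈ Ideal.jacobson (⊥ : Ideal R) := by
        have := neg_mem he1a
        rwa [neg_sub] at this
      have hv : IsUnit (1 - (a - e1)) := by
        have := myJ_isUnit hae1 1
        rwa [one_mul] at this
      set V := hv.unit with hVdef
      have hVspec : (V : R) = 1 - (a - e1) := hv.unit_spec
      refine ⟨↑V⁻¹ * (e1 * ↑V), ?_, ?_, ?_⟩
      · show (↑V⁻¹ * (e1 * ↑V)) * (↑V⁻¹ * (e1 * ↑V)) = ↑V⁻¹ * (e1 * ↑V)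
        calc (↑V⁻¹ * (e1 * ↑V)) * (↑V⁻¹ * (e1 * ↑V))
            = ↑V⁻¹ * ((e1 * (↑V * ↑V⁻¹)) * (e1 * ↑V)) := by noncomm_ring
          _ = ↑V⁻¹ * ((e1 * 1) * (e1 * ↑V)) := by rw [Units.mul_inv]
          _ = ↑V⁻¹ * ((e1 * e1) * ↑V) := by rw [mul_one]; noncomm_ring
          _ = ↑V⁻¹ * (e1 * ↑V) := by rw [he1e1]
      · apply Submodule.mem_span_singleton.mpr
        refine ⟨↑V⁻¹ * (↑U⁻¹ * f + ↑U⁻¹ * f - ↑U⁻¹ * (f * a)), ?_⟩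
        rw [smul_eq_mul]
        have hstep : e1 * ↑V = (↑U⁻¹ * f + ↑U⁻¹ * f - ↑U⁻¹ * (f * a)) * a := by
          rw [hVspec]
          calc e1 * (1 - (a - e1)) = e1 - e1 * a + e1 * e1 := by noncomm_ring
            _ = e1 - e1 * a + e1 := by rw [he1e1]
            _ = ↑U⁻¹ * (f * a) - (↑U⁻¹ * (f * a)) * a + ↑U⁻¹ * (f * a) := by rw [he1def]
            _ = (↑U⁻¹ * f + ↑U⁻¹ * f - ↑U⁻¹ * (f * a)) * a := by noncomm_ring
        rw [mul_assoc, hstep, ← mul_assoc]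
      · apply Submodule.mem_span_singleton.mpr
        refine ⟨↑V⁻¹ * (1 - e1), ?_⟩
        rw [smul_eq_mul]
        have hv1 : (1 - e1) * ↑V = (1 - e1) * (1 - a) := by
          rw [hVspec]
          calc (1 - e1) * (1 - (a - e1)) = (1 - e1) * (1 - a) + (e1 - e1 * e1) := by
                noncomm_ring
            _ = (1 - e1) * (1 - a) + (e1 - e1) := by rw [he1e1]
            _ = (1 - e1) * (1 - a) := by rw [sub_self, add_zero]
        calc (↑V⁻¹ * (1 - e1)) * (1 - a) = ↑V⁻¹ * ((1 - e1) * (1 - a)) := by rw [mul_assoc]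
          _ = ↑V⁻¹ * ((1 - e1) * ↑V) := by rw [hv1]
          _ = ↑V⁻¹ * (↑V - e1 * ↑V) := by rw [sub_mul, one_mul]
          _ = 1 - ↑V⁻¹ * (e1 * ↑V) := by rw [mul_sub, Units.inv_mul]
    · -- UJ#
      intro u
      refine ⟨1, le_refl 1, ?_⟩
      rw [pow_one]
      have h := hsb (u : R)
      have heq : (u : R) - 1 = ↑u⁻¹ * ((u : R) ^ 2 - (u : R)) := by
        rw [pow_two, mul_sub, ← mul_assoc, Units.inv_mul, one_mul]
      rw [heq]
      exact Ideal.mul_mem_left _ _ h
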